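/- For the tractional constraint of Example 4.1: if t, x, y : ℝ → ℝ are differentiable, satisfy (x − t)² + y² = 1 and y'·(x − t) = x'·(y − 1) everywhere, then the differential consequence (x')²·y − (x')² + (y')²·y + (y')² = 0 holds at every point where y ≠ 1. -/
import Mathlib

theorem tractional_consequence (t x y : ℝ → ℝ)
    (ht : Differentiable ℝ t) (hx : Differentiable ℝ x) (hy : Differentiable ℝ y)
    (h1 : ∀ s, (x s - t s) ^ 2 + (y s) ^ 2 = 1)
    (h2 : ∀ s, deriv y s * (x s - t s) = deriv x s * (y s - 1)) :
    ∀ s, y s ≠ 1 →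
      (deriv x s) ^ 2 * y s - (deriv x s) ^ 2 + (deriv y s) ^ 2 * y s + (deriv y s) ^ 2 = 0 := by
  intro s hs
  have h1s := h1 s
  have h2s := h2 s
  have hne : y s - 1 ≠ 0 := sub_ne_zero.mpr hs
  have hsq : (deriv y s * (x s - t s)) ^ 2 = (deriv x s * (y s - 1)) ^ 2 := by rw [h2s]
  have key : ((deriv x s) ^ 2 * y s - (deriv x s) ^ 2 + (deriv y s) ^ 2 * y s
      + (deriv y s) ^ 2) * (y s - 1) = 0 := by
    linear_combination (deriv y s) ^ 2 * h1s - hsq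
  exact (mul_eq_zero.mp key).resolve_right hne
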